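/- Stationary functional equation: if (V¹,V²) is a stationary solution of the two-dimensional Lindley recursion with simultaneous Poisson(λ) arrivals and ordered service times B¹ ≥ B² a.s., then its LST ψ satisfies (1 - λφ(s,t)/(λ-s-t))·ψ(s,t) = (λ/(λ-s) - λ/(λ-s-t))·φ(s,λ-s)ψ(s,λ-s) + (1 - λ/(λ-s))·φ(λ,0)ψ(λ,0), for s,t > 0 with s ≠ λ and s+t ≠ λ. -/

import Mathlib

open MeasureTheory ProbabilityTheory

open Real Set
open scoped ENNReal NNReal

section helpers
lemma my_integral_expMeasure (r : ℝ) (hr : 0 < r) (h : ℝ → ℝ) :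
    ∫ x, h x ∂(expMeasure r)
      = ∫ x in Ioi (0:ℝ), r * Real.exp (-(r * x)) * h x := by
  have hd : expMeasure r
      = MeasureTheory.volume.withDensity
          (fun x => ((exponentialPDFReal r x).toNNReal : ℝ≥0∞)) := rfl
  rw [hd, integral_withDensity_eq_integral_smul
    (measurable_exponentialPDFReal r).real_toNNReal h]
  have hpdf : ∀ x : ℝ, exponentialPDFReal r x = if 0 ≤ x then r * Real.exp (-(r*x)) else 0 := by
    intro x
    rw [exponentialPDFReal, gammaPDFReal]
    simp [Real.Gamma_one, Real.rpow_one, Real.rpow_zero]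
  have : ∀ x : ℝ, (exponentialPDFReal r x).toNNReal • h x
      = Set.indicator (Ici (0:ℝ)) (fun x => r * Real.exp (-(r * x)) * h x) x := by
    intro x
    rw [NNReal.smul_def, smul_eq_mul, Real.coe_toNNReal _ (exponentialPDFReal_nonneg hr x), hpdf]
    by_cases hx : 0 ≤ x <;> simp [hx, Set.indicator_of_mem, Set.indicator_of_notMem]
  simp_rw [this]
  rw [integral_indicator measurableSet_Ici, integral_Ici_eq_integral_Ioi]

lemma my_exp_Ioc (c a b : ℝ) (hc : c ≠ 0) (hab : a ≤ b) :
    ∫ x in Ioc a b, Real.exp (c * x) = (Real.exp (c*b) - Real.exp (c*a))/c := by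
  rw [← intervalIntegral.integral_of_le hab,
    intervalIntegral.integral_comp_mul_left (fun x => Real.exp x) hc,
    integral_exp, smul_eq_mul]
  field_simp

lemma my_exp_Ioi (r w : ℝ) (hr : 0 < r) :
    ∫ x in Ioi w, r * Real.exp (-(r * x)) = Real.exp (-(r * w)) := by
  rw [MeasureTheory.integral_const_mul]
  have h : ∫ x in Ioi w, Real.exp (-(r * x)) = r⁻¹ • ∫ x in Ioi (r * w), Real.exp (-x) :=
    integral_comp_mul_left_Ioi (fun x => Real.exp (-x)) w hr
  rw [h, integral_exp_neg_Ioi, smul_eq_mul]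
  field_simp

lemma my_inner_calc (s t lam w1 w2 : ℝ) (hs : 0 < s) (ht : 0 < t) (hlam : 0 < lam)
    (hsl : s ≠ lam) (hstl : s + t ≠ lam) (hw2 : 0 ≤ w2) (hw21 : w2 ≤ w1) :
    ∫ x in Ioi (0:ℝ),
        lam * Real.exp (-(lam * x)) * Real.exp (-s * max (w1 - x) 0 - t * max (w2 - x) 0)
      = (1 + lam/(s-lam)) * Real.exp (-(lam * w1))
        + (lam/(s+t-lam) - lam/(s-lam)) * Real.exp (-(s*w1) + (s-lam)*w2)
        - lam/(s+t-lam) * Real.exp (-(s*w1) - t*w2) := by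
  have hw1 : 0 ≤ w1 := hw2.trans hw21
  have hc1 : s - lam ≠ 0 := sub_ne_zero.mpr hsl
  have hc2 : s + t - lam ≠ 0 := sub_ne_zero.mpr hstl
  set f : ℝ → ℝ :=
    fun x => lam * Real.exp (-(lam * x)) * Real.exp (-s * max (w1 - x) 0 - t * max (w2 - x) 0)
    with hf
  have hf_cont : Continuous f := by fun_prop
  have hI1 : IntegrableOn f (Ioc 0 w2) := hf_cont.integrableOn_Ioc
  have hI2 : IntegrableOn f (Ioc w2 w1) := hf_cont.integrableOn_Ioc
  have hI3 : IntegrableOn f (Ioi w1) := by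
    have base : IntegrableOn (fun x => lam * Real.exp (-(lam * x))) (Ioi w1) := by
      simpa [neg_mul, IntegrableOn] using (exp_neg_integrableOn_Ioi w1 hlam).const_mul lam
    refine base.congr ((ae_restrict_iff' measurableSet_Ioi).2 (ae_of_all _ fun x hx => ?_))
    have h1 : max (w1 - x) 0 = 0 := max_eq_right (by simp only [mem_Ioi] at hx; linarith)
    have h2 : max (w2 - x) 0 = 0 := max_eq_right (by simp only [mem_Ioi] at hx; linarith)
    simp [hf, h1, h2]
  have hset1 : Ioi (0:ℝ) = Ioc 0 w1 ∪ Ioi w1 := (Ioc_union_Ioi_eq_Ioi hw1).symm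
  have hset2 : Ioc (0:ℝ) w1 = Ioc 0 w2 ∪ Ioc w2 w1 := (Ioc_union_Ioc_eq_Ioc hw2 hw21).symm
  have hsplit : ∫ x in Ioi (0:ℝ), f x
      = ((∫ x in Ioc (0:ℝ) w2, f x) + ∫ x in Ioc w2 w1, f x) + ∫ x in Ioi w1, f x := by
    rw [hset1, setIntegral_union (Ioc_disjoint_Ioi le_rfl) measurableSet_Ioi
      (by rw [hset2]; exact hI1.union hI2) hI3, hset2,
      setIntegral_union (Set.Ioc_disjoint_Ioc_of_le le_rfl) measurableSet_Ioc hI1 hI2]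
  have hp1 : ∫ x in Ioc (0:ℝ) w2, f x
      = lam/(s+t-lam) * Real.exp (-(s*w1) + (s-lam)*w2)
        - lam/(s+t-lam) * Real.exp (-(s*w1) - t*w2) := by
    have he : ∀ x ∈ Ioc (0:ℝ) w2, f x
        = (lam * Real.exp (-(s*w1) - t*w2)) * Real.exp ((s+t-lam) * x) := by
      intro x hx
      obtain ⟨hx0, hxw2⟩ := hx
      have h1 : max (w1 - x) 0 = w1 - x := max_eq_left (by linarith)
      have h2 : max (w2 - x) 0 = w2 - x := max_eq_left (by linarith)
      rw [hf]
      simp only [h1, h2]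
      rw [mul_assoc, ← Real.exp_add, mul_assoc, ← Real.exp_add]
      ring_nf
    rw [setIntegral_congr_fun measurableSet_Ioc he, MeasureTheory.integral_const_mul,
      my_exp_Ioc _ _ _ hc2 hw2, mul_zero, Real.exp_zero]
    have e1 : Real.exp (-(s*w1) - t*w2) * Real.exp ((s+t-lam)*w2)
        = Real.exp (-(s*w1) + (s-lam)*w2) := by rw [← Real.exp_add]; ring_nf
    linear_combination (lam/(s+t-lam)) * e1
  have hp2 : ∫ x in Ioc w2 w1, f x
      = lam/(s-lam) * Real.exp (-(lam * w1))
        - lam/(s-lam) * Real.exp (-(s*w1) + (s-lam)*w2) := by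
    have he : ∀ x ∈ Ioc w2 w1, f x
        = (lam * Real.exp (-(s*w1))) * Real.exp ((s-lam) * x) := by
      intro x hx
      obtain ⟨hxw2, hxw1⟩ := hx
      have h1 : max (w1 - x) 0 = w1 - x := max_eq_left (by linarith)
      have h2 : max (w2 - x) 0 = 0 := max_eq_right (by linarith)
      rw [hf]
      simp only [h1, h2]
      rw [mul_assoc, ← Real.exp_add, mul_assoc, ← Real.exp_add]
      ring_nf
    rw [setIntegral_congr_fun measurableSet_Ioc he, MeasureTheory.integral_const_mul,
      my_exp_Ioc _ _ _ hc1 hw21]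
    have e2 : Real.exp (-(s*w1)) * Real.exp ((s-lam)*w1) = Real.exp (-(lam*w1)) := by
      rw [← Real.exp_add]; ring_nf
    have e3 : Real.exp (-(s*w1)) * Real.exp ((s-lam)*w2)
        = Real.exp (-(s*w1) + (s-lam)*w2) := by rw [← Real.exp_add]
    linear_combination (lam/(s-lam)) * e2 - (lam/(s-lam)) * e3
  have hp3 : ∫ x in Ioi w1, f x = Real.exp (-(lam * w1)) := by
    have he : ∀ x ∈ Ioi w1, f x = lam * Real.exp (-(lam * x)) := by
      intro x hx
      have h1 : max (w1 - x) 0 = 0 := max_eq_right (by simp only [mem_Ioi] at hx; linarith)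
      have h2 : max (w2 - x) 0 = 0 := max_eq_right (by simp only [mem_Ioi] at hx; linarith)
      simp [hf, h1, h2]
    rw [setIntegral_congr_fun measurableSet_Ioi he, my_exp_Ioi _ _ hlam]
  rw [hsplit, hp1, hp2, hp3]
  ring

lemma my_map_eq_exp {Ω : Type*} [MeasurableSpace Ω] (μ : Measure Ω) [IsProbabilityMeasure μ]
    (A : Ω → ℝ) (hAm : Measurable A) (hAn : ∀ ω, 0 ≤ A ω) (lam : ℝ) (hlam : 0 < lam)
    (hAexp : ∀ x : ℝ, 0 ≤ x → (μ {ω | x < A ω}).toReal = Real.exp (-lam * x)) :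
    Measure.map A μ = expMeasure lam := by
  have hprob2 := isProbabilityMeasure_expMeasure hlam
  have hprob : IsProbabilityMeasure (Measure.map A μ) := Measure.isProbabilityMeasure_map hAm.aemeasurable
  refine Measure.ext_of_Iic _ _ fun x => ?_
  rw [Measure.map_apply hAm measurableSet_Iic, ← ProbabilityTheory.ofReal_cdf (expMeasure lam) x]
  have hcdf : cdf (expMeasure lam) x = if 0 ≤ x then 1 - Real.exp (-(lam*x)) else 0 :=
    cdf_expMeasure_eq hlam x
  rw [hcdf]
  by_cases hx : 0 ≤ x
  · rw [if_pos hx]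
    have hset : A ⁻¹' Iic x = {ω | x < A ω}ᶜ := by
      ext ω; simp [not_lt]
    have hms : MeasurableSet {ω | x < A ω} := hAm measurableSet_Ioi
    rw [hset, measure_compl hms (measure_ne_top μ _), measure_univ]
    have hμs : μ {ω | x < A ω} = ENNReal.ofReal (Real.exp (-lam * x)) := by
      rw [← hAexp x hx, ENNReal.ofReal_toReal (measure_ne_top μ _)]
    rw [hμs, ENNReal.ofReal_sub _ (Real.exp_pos _).le, ENNReal.ofReal_one, neg_mul]
  · rw [if_neg hx]
    have hset : A ⁻¹' Iic x = ∅ := by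
      ext ω
      simp only [mem_preimage, mem_Iic, mem_empty_iff_false, iff_false, not_le]
      have := hAn ω; linarith [not_le.mp hx]
    rw [hset]
    simp
end helpers

/-- Stationary functional equation (Formula (3) in the paper): if `(V¹,V²)` is a
stationary solution of the two-dimensional Lindley recursion with exponential(λ)
interarrival times and a.s. ordered service times `B¹ ≥ B²`, then its LST `ψ` satisfies
`(1 - λφ(s,t)/(λ-s-t)) ψ(s,t) = (λ/(λ-s) - λ/(λ-s-t)) φ(s,λ-s) ψ(s,λ-s)
  + (1 - λ/(λ-s)) φ(λ,0) ψ(λ,0)` for `s,t > 0`, `s ≠ λ`, `s+t ≠ λ`. -/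
theorem stmt7 {Ω : Type*} [MeasurableSpace Ω] (μ : Measure Ω) [IsProbabilityMeasure μ]
    (V1 V2 B1 B2 A : Ω → ℝ)
    (hV1m : Measurable V1) (hV2m : Measurable V2) (hB1m : Measurable B1)
    (hB2m : Measurable B2) (hAm : Measurable A)
    (hV1n : ∀ ω, 0 ≤ V1 ω) (hV2n : ∀ ω, 0 ≤ V2 ω)
    (hB1n : ∀ ω, 0 ≤ B1 ω) (hB2n : ∀ ω, 0 ≤ B2 ω) (hAn : ∀ ω, 0 ≤ A ω)
    (hordV : ∀ᵐ ω ∂μ, V2 ω ≤ V1 ω) (hordB : ∀ᵐ ω ∂μ, B2 ω ≤ B1 ω)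
    (lam : ℝ) (hlam : 0 < lam)
    (hAexp : ∀ x : ℝ, 0 ≤ x → (μ {ω | x < A ω}).toReal = Real.exp (-lam * x))
    (hindepA : IndepFun (fun ω => (V1 ω, V2 ω, B1 ω, B2 ω)) A μ)
    (hindepB : IndepFun (fun ω => (B1 ω, B2 ω)) (fun ω => (V1 ω, V2 ω)) μ)
    (hstat : Measure.map
        (fun ω => (max (V1 ω + B1 ω - A ω) 0, max (V2 ω + B2 ω - A ω) 0)) μ
      = Measure.map (fun ω => (V1 ω, V2 ω)) μ)
    (ψ φ : ℝ → ℝ → ℝ)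
    (hψ : ∀ s t : ℝ, ψ s t = ∫ ω, Real.exp (-s * V1 ω - t * V2 ω) ∂μ)
    (hφ : ∀ s t : ℝ, φ s t = ∫ ω, Real.exp (-s * B1 ω - t * B2 ω) ∂μ)
    (s t : ℝ) (hs : 0 < s) (ht : 0 < t) (hsl : s ≠ lam) (hstl : s + t ≠ lam) :
    (1 - lam * φ s t / (lam - s - t)) * ψ s t
      = (lam / (lam - s) - lam / (lam - s - t)) * φ s (lam - s) * ψ s (lam - s)
        + (1 - lam / (lam - s)) * φ lam 0 * ψ lam 0 := by
  -- notation
  set W : Ω → ℝ × ℝ := fun ω => (V1 ω + B1 ω, V2 ω + B2 ω) with hW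
  have hWm : Measurable W := (hV1m.add hB1m).prodMk (hV2m.add hB2m)
  set ν : Measure (ℝ × ℝ) := Measure.map W μ with hν
  set α : Measure ℝ := Measure.map A μ with hα0
  have hνp : IsProbabilityMeasure ν := Measure.isProbabilityMeasure_map hWm.aemeasurable
  have hαp : IsProbabilityMeasure α := Measure.isProbabilityMeasure_map hAm.aemeasurable
  have hα : α = expMeasure lam := my_map_eq_exp μ A hAm hAn lam hlam hAexp
  set G : (ℝ × ℝ) × ℝ → ℝ :=
    fun q => Real.exp (-s * max (q.1.1 - q.2) 0 - t * max (q.1.2 - q.2) 0) with hG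
  have hGc : Continuous G := by fun_prop
  set g : ℝ × ℝ → ℝ := fun w =>
    (1 + lam/(s-lam)) * Real.exp (-(lam * w.1))
      + (lam/(s+t-lam) - lam/(s-lam)) * Real.exp (-(s*w.1) + (s-lam)*w.2)
      - lam/(s+t-lam) * Real.exp (-(s*w.1) - t*w.2) with hg
  have hgc : Continuous g := by fun_prop
  -- factorization of LSTs
  have hfactor : ∀ a b : ℝ,
      ∫ ω, Real.exp (-a * (V1 ω + B1 ω) - b * (V2 ω + B2 ω)) ∂μ = φ a b * ψ a b := by
    intro a b
    have hm : Measurable fun p : ℝ × ℝ => Real.exp (-a * p.1 - b * p.2) := by fun_prop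
    have hind : IndepFun (fun ω => Real.exp (-a * B1 ω - b * B2 ω))
        (fun ω => Real.exp (-a * V1 ω - b * V2 ω)) μ := by
      have := hindepB.comp hm hm
      simpa [Function.comp_def] using this
    have heq : ∀ ω, Real.exp (-a * (V1 ω + B1 ω) - b * (V2 ω + B2 ω))
        = Real.exp (-a * B1 ω - b * B2 ω) * Real.exp (-a * V1 ω - b * V2 ω) := by
      intro ω; rw [← Real.exp_add]; ring_nf
    rw [integral_congr_ae (ae_of_all _ heq),
      hind.integral_fun_mul_eq_mul_integral (hm.comp (hB1m.prodMk hB2m)).aestronglyMeasurable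
        (hm.comp (hV1m.prodMk hV2m)).aestronglyMeasurable, hφ, hψ]
  -- integrability of the exponential terms
  have hintg : ∀ a b : ℝ, 0 ≤ a → 0 ≤ a + b →
      Integrable (fun ω => Real.exp (-a * (V1 ω + B1 ω) - b * (V2 ω + B2 ω))) μ := by
    intro a b ha hab
    refine Integrable.mono' (integrable_const 1)
      (Measurable.aestronglyMeasurable (by fun_prop)) ?_
    filter_upwards [hordV, hordB] with ω h1 h2
    rw [Real.norm_eq_abs, abs_of_pos (Real.exp_pos _), Real.exp_le_one_iff]
    have k1 : 0 ≤ a * ((V1 ω + B1 ω) - (V2 ω + B2 ω)) :=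
      mul_nonneg ha (by linarith)
    have k2 : 0 ≤ (a + b) * (V2 ω + B2 ω) :=
      mul_nonneg hab (by linarith [hV2n ω, hB2n ω])
    nlinarith [k1, k2]
  -- step 1 : stationarity
  have hFc : Continuous fun p : ℝ × ℝ => Real.exp (-s * p.1 - t * p.2) := by fun_prop
  have hMxm : Measurable fun ω =>
      (max (V1 ω + B1 ω - A ω) 0, max (V2 ω + B2 ω - A ω) 0) := by fun_prop
  have step1 : ψ s t = ∫ ω, Real.exp (-s * max (V1 ω + B1 ω - A ω) 0
      - t * max (V2 ω + B2 ω - A ω) 0) ∂μ := by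
    rw [hψ, ← integral_map (hV1m.prodMk hV2m).aemeasurable hFc.aestronglyMeasurable, ← hstat,
      integral_map hMxm.aemeasurable hFc.aestronglyMeasurable]
  -- step 2 : independence and product measure
  have hWA : IndepFun W A μ := by
    have h4m : Measurable fun q : ℝ × ℝ × ℝ × ℝ => (q.1 + q.2.2.1, q.2.1 + q.2.2.2) := by
      fun_prop
    have := hindepA.comp h4m measurable_id
    simpa [Function.comp_def, hW] using this
  have hpair : Measure.map (fun ω => (W ω, A ω)) μ = ν.prod α :=
    (indepFun_iff_map_prod_eq_prod_map_map hWm.aemeasurable hAm.aemeasurable).mp hWA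
  have step2 : ∫ ω, Real.exp (-s * max (V1 ω + B1 ω - A ω) 0
      - t * max (V2 ω + B2 ω - A ω) 0) ∂μ = ∫ q, G q ∂(ν.prod α) := by
    rw [← hpair, integral_map (hWm.prodMk hAm).aemeasurable hGc.aestronglyMeasurable]
  -- step 3 : Fubini
  have hGint : Integrable G (ν.prod α) := by
    refine Integrable.mono' (integrable_const 1) hGc.aestronglyMeasurable
      (ae_of_all _ fun q => ?_)
    rw [Real.norm_eq_abs, abs_of_pos (Real.exp_pos _), Real.exp_le_one_iff]
    nlinarith [le_max_right (q.1.1 - q.2) (0:ℝ), le_max_right (q.1.2 - q.2) (0:ℝ)]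
  have step3 : ∫ q, G q ∂(ν.prod α) = ∫ w, ∫ a, G (w, a) ∂α ∂ν := integral_prod G hGint
  -- step 4 : inner integral computation
  have haeν : ∀ᵐ w ∂ν, 0 ≤ w.2 ∧ w.2 ≤ w.1 := by
    have hms : MeasurableSet {p : ℝ × ℝ | 0 ≤ p.2 ∧ p.2 ≤ p.1} :=
      (measurableSet_le measurable_const measurable_snd).inter
        (measurableSet_le measurable_snd measurable_fst)
    rw [hν, ae_map_iff hWm.aemeasurable hms]
    filter_upwards [hordV, hordB] with ω h1 h2
    exact ⟨add_nonneg (hV2n ω) (hB2n ω), add_le_add h1 h2⟩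
  have step4 : ∫ w, ∫ a, G (w, a) ∂α ∂ν = ∫ w, g w ∂ν := by
    refine integral_congr_ae (haeν.mono fun w hw => ?_)
    show (∫ a, G (w, a) ∂α) = g w
    rw [hα, my_integral_expMeasure lam hlam (fun a => G (w, a))]
    exact my_inner_calc s t lam w.1 w.2 hs ht hlam hsl hstl hw.1 hw.2
  -- step 5 : back to μ
  have step5 : ∫ w, g w ∂ν = ∫ ω, g (W ω) ∂μ :=
    integral_map hWm.aemeasurable hgc.aestronglyMeasurable
  -- step 6 : linearity and factorization
  have hsplitfun : ∀ ω, g (W ω)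
      = (1 + lam/(s-lam)) * Real.exp (-lam * (V1 ω + B1 ω) - 0 * (V2 ω + B2 ω))
        + ((lam/(s+t-lam) - lam/(s-lam))
            * Real.exp (-s * (V1 ω + B1 ω) - (lam - s) * (V2 ω + B2 ω))
          + (-(lam/(s+t-lam))) * Real.exp (-s * (V1 ω + B1 ω) - t * (V2 ω + B2 ω))) := by
    intro ω
    simp only [hg, hW]
    rw [show -(lam * (V1 ω + B1 ω)) = -lam * (V1 ω + B1 ω) - 0 * (V2 ω + B2 ω) by ring,
      show -(s * (V1 ω + B1 ω)) + (s - lam) * (V2 ω + B2 ω)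
        = -s * (V1 ω + B1 ω) - (lam - s) * (V2 ω + B2 ω) by ring,
      show -(s * (V1 ω + B1 ω)) - t * (V2 ω + B2 ω)
        = -s * (V1 ω + B1 ω) - t * (V2 ω + B2 ω) by ring]
    ring
  have step6 : ∫ ω, g (W ω) ∂μ
      = (1 + lam/(s-lam)) * (φ lam 0 * ψ lam 0)
        + ((lam/(s+t-lam) - lam/(s-lam)) * (φ s (lam - s) * ψ s (lam - s))
          + (-(lam/(s+t-lam))) * (φ s t * ψ s t)) := by
    have e0 : Integrable (fun ω =>
        (1 + lam/(s-lam)) * Real.exp (-lam * (V1 ω + B1 ω) - 0 * (V2 ω + B2 ω))) μ :=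
      (hintg lam 0 hlam.le (by linarith)).const_mul _
    have e1 : Integrable (fun ω => (lam/(s+t-lam) - lam/(s-lam))
        * Real.exp (-s * (V1 ω + B1 ω) - (lam - s) * (V2 ω + B2 ω))) μ :=
      (hintg s (lam - s) hs.le (by linarith)).const_mul _
    have e2 : Integrable (fun ω =>
        (-(lam/(s+t-lam))) * Real.exp (-s * (V1 ω + B1 ω) - t * (V2 ω + B2 ω))) μ :=
      (hintg s t hs.le (by linarith)).const_mul _
    have e12 : Integrable (fun ω => (lam/(s+t-lam) - lam/(s-lam))
        * Real.exp (-s * (V1 ω + B1 ω) - (lam - s) * (V2 ω + B2 ω))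
        + (-(lam/(s+t-lam))) * Real.exp (-s * (V1 ω + B1 ω) - t * (V2 ω + B2 ω))) μ :=
      e1.add e2
    rw [integral_congr_ae (ae_of_all _ hsplitfun), integral_add e0 e12]
    rw [integral_add e1 e2, MeasureTheory.integral_const_mul, MeasureTheory.integral_const_mul,
      MeasureTheory.integral_const_mul, hfactor, hfactor, hfactor]
  have main : ψ s t
      = (1 + lam/(s-lam)) * (φ lam 0 * ψ lam 0)
        + ((lam/(s+t-lam) - lam/(s-lam)) * (φ s (lam - s) * ψ s (lam - s))
          + (-(lam/(s+t-lam))) * (φ s t * ψ s t)) :=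
    step1.trans (step2.trans (step3.trans (step4.trans (step5.trans step6))))
  have h1 : lam - s ≠ 0 := sub_ne_zero.mpr (Ne.symm hsl)
  have h2 : lam - s - t ≠ 0 := fun h => hstl (by linarith)
  have h1' : s - lam ≠ 0 := sub_ne_zero.mpr hsl
  have h2' : s + t - lam ≠ 0 := sub_ne_zero.mpr hstl
  field_simp at main ⊢
  linear_combination main
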